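/- Let C be a coalgebra over a field K and M a finite-dimensional right C-comodule with coaction ρ : M → M ⊗ C. Then there exists a smallest finite-dimensional subcoalgebra cf_C(M) of C such that ρ(M) ⊆ M ⊗ cf_C(M). -/

import Mathlib

open TensorProduct LinearMap

section helpers
variable {K M : Type*} [Field K] [AddCommGroup M] [Module K M]
variable {ι : Type*} [Fintype ι] [DecidableEq ι]

/-- coefficient extraction: `phi b N j (m ⊗ x) = (b.coord j m) • x`. -/
noncomputable def phiAux (b : Module.Basis ι K M) (N : Type*) [AddCommGroup N] [Module K N] (j : ι) :
    M ⊗[K] N →ₗ[K] N :=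
  (TensorProduct.lid K N).toLinearMap ∘ₗ LinearMap.rTensor N (b.coord j)

lemma phiAux_tmul (b : Module.Basis ι K M) (N : Type*) [AddCommGroup N] [Module K N] (j : ι)
    (m : M) (x : N) : phiAux b N j (m ⊗ₜ x) = b.coord j m • x := by
  simp [phiAux]

lemma phiAux_natural (b : Module.Basis ι K M) {N N' : Type*} [AddCommGroup N] [Module K N]
    [AddCommGroup N'] [Module K N'] (f : N →ₗ[K] N') (j : ι) (t : M ⊗[K] N) :
    phiAux b N' j (LinearMap.lTensor M f t) = f (phiAux b N j t) := by
  induction t using TensorProduct.induction_on with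
  | zero => simp
  | tmul m x => simp [phiAux_tmul, map_smul]
  | add x y hx hy => simp [map_add, hx, hy]

lemma sum_tmul_phiAux (b : Module.Basis ι K M) (N : Type*) [AddCommGroup N] [Module K N]
    (t : M ⊗[K] N) : ∑ j, b j ⊗ₜ[K] phiAux b N j t = t := by
  induction t using TensorProduct.induction_on with
  | zero => simp
  | tmul m x =>
    simp only [phiAux_tmul]
    calc ∑ j, b j ⊗ₜ[K] (b.coord j m • x) = ∑ j, (b.coord j m • b j) ⊗ₜ[K] x := by
          simp [TensorProduct.smul_tmul]
      _ = (∑ j, b.coord j m • b j) ⊗ₜ[K] x := by rw [TensorProduct.sum_tmul]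
      _ = m ⊗ₜ[K] x := by simp only [Module.Basis.coord_apply]; rw [b.sum_repr m]
  | add x y hx hy =>
    simp only [map_add, TensorProduct.tmul_add, Finset.sum_add_distrib, hx, hy]

lemma mem_range_lTensor_subtype (b : Module.Basis ι K M) {N : Type*} [AddCommGroup N] [Module K N]
    (D : Submodule K N) (t : M ⊗[K] N) (h : ∀ j, phiAux b N j t ∈ D) :
    t ∈ LinearMap.range (LinearMap.lTensor M D.subtype) := by
  refine ⟨∑ j, b j ⊗ₜ[K] (⟨phiAux b N j t, h j⟩ : D), ?_⟩
  rw [map_sum]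
  simp only [LinearMap.lTensor_tmul, Submodule.subtype_apply]
  exact sum_tmul_phiAux b N t

lemma phiAux_mem_of_mem_range (b : Module.Basis ι K M) {N : Type*} [AddCommGroup N] [Module K N]
    (D : Submodule K N) (t : M ⊗[K] N)
    (h : t ∈ LinearMap.range (LinearMap.lTensor M D.subtype)) (j : ι) :
    phiAux b N j t ∈ D := by
  obtain ⟨y, rfl⟩ := h
  rw [phiAux_natural]
  exact (phiAux b D j y).2

end helpers



open TensorProduct LinearMap

/-- `D` is a subcoalgebra of the `K`-coalgebra `C`: the comultiplication sends `D`
into the image of `D ⊗ D` in `C ⊗ C`. -/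
def IsSubcoalgebra {K C : Type*} [CommSemiring K] [AddCommMonoid C] [Module K C]
    [Coalgebra K C] (D : Submodule K C) : Prop :=
  ∀ x ∈ D, Coalgebra.comul (R := K) x ∈
    LinearMap.range (TensorProduct.map D.subtype D.subtype)

/-- **Existence of the coalgebra of coefficients** (Section 4).
Let `C` be a coalgebra over a field `K` and `M` a finite-dimensional right
`C`-comodule with coaction `ρ : M → M ⊗ C`.  Then there is a smallest
finite-dimensional subcoalgebra `cf_C(M)` of `C` with `ρ(M) ⊆ M ⊗ cf_C(M)`. -/
theorem exists_coefficient_coalgebra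
    (K : Type*) [Field K] (C : Type*) [AddCommGroup C] [Module K C] [Coalgebra K C]
    (M : Type*) [AddCommGroup M] [Module K M] [FiniteDimensional K M]
    (ρ : M →ₗ[K] M ⊗[K] C)
    -- comodule coassociativity: (ρ ⊗ 1) ∘ ρ = (1 ⊗ Δ) ∘ ρ
    (hcoassoc : ∀ m : M, (TensorProduct.assoc K M C C)
        ((LinearMap.rTensor C ρ) (ρ m)) =
        (LinearMap.lTensor M (Coalgebra.comul (R := K))) (ρ m))
    -- comodule counit axiom: (1 ⊗ ε) ∘ ρ = id
    (hcounit : ∀ m : M,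
        (TensorProduct.rid K M) ((LinearMap.lTensor M (Coalgebra.counit (R := K))) (ρ m)) = m) :
    ∃ D : Submodule K C, IsSubcoalgebra D ∧ FiniteDimensional K D ∧
      (∀ m : M, ρ m ∈ LinearMap.range (LinearMap.lTensor M D.subtype)) ∧
      (∀ D' : Submodule K C, IsSubcoalgebra D' → FiniteDimensional K D' →
        (∀ m : M, ρ m ∈ LinearMap.range (LinearMap.lTensor M D'.subtype)) → D ≤ D') := by
  classical
  let b := Module.finBasis K M
  set n := Module.finrank K M with hn
  -- coefficient matrix
  set c : Fin n → Fin n → C := fun j i => phiAux b C j (ρ (b i)) with hc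
  set D : Submodule K C :=
    Submodule.span K (Set.range fun p : Fin n × Fin n => c p.1 p.2) with hD
  have hmem : ∀ j i, c j i ∈ D := fun j i =>
    Submodule.subset_span ⟨(j, i), rfl⟩
  -- every coefficient of ρ m lies in D
  have hcoeff : ∀ (m : M) (j : Fin n), phiAux b C j (ρ m) ∈ D := by
    intro m j
    have hm : m = ∑ i, b.repr m i • b i := (b.sum_repr m).symm
    rw [hm]
    simp only [map_sum, map_smul]
    exact Submodule.sum_mem D fun i _ => Submodule.smul_mem D _ (hmem j i)
  have hbD : ∀ i, ρ (b i) = ∑ j, b j ⊗ₜ[K] c j i := fun i =>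
    (sum_tmul_phiAux b C (ρ (b i))).symm
  -- comultiplication of coefficients
  have key : ∀ k i, Coalgebra.comul (R := K) (c k i) = ∑ j, c k j ⊗ₜ[K] c j i := by
    intro k i
    have h2 := congrArg (phiAux b (C ⊗[K] C) k) (hcoassoc (b i))
    rw [phiAux_natural] at h2
    rw [← h2]
    -- now compute the LHS
    rw [hbD i, map_sum, map_sum, map_sum]
    have : ∀ j : Fin n,
        phiAux b (C ⊗[K] C) k ((TensorProduct.assoc K M C C)
          ((LinearMap.rTensor C ρ) (b j ⊗ₜ[K] c j i))) = c k j ⊗ₜ[K] c j i := by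
      intro j
      rw [LinearMap.rTensor_tmul, hbD j, TensorProduct.sum_tmul, map_sum, map_sum]
      have : ∀ l : Fin n,
          phiAux b (C ⊗[K] C) k ((TensorProduct.assoc K M C C)
            ((b l ⊗ₜ[K] c l j) ⊗ₜ[K] c j i)) =
          (if l = k then (1:K) else 0) • (c l j ⊗ₜ[K] c j i) := by
        intro l
        rw [TensorProduct.assoc_tmul, phiAux_tmul]
        congr 1
        simp [Module.Basis.coord_apply, Module.Basis.repr_self, Finsupp.single_apply]
      rw [Finset.sum_congr rfl (fun l _ => this l)]
      simp
    rw [Finset.sum_congr rfl (fun j _ => this j)]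
  refine ⟨D, ?_, ?_, ?_, ?_⟩
  · -- subcoalgebra
    intro x hx
    induction hx using Submodule.span_induction with
    | mem x hx =>
      obtain ⟨⟨k, i⟩, rfl⟩ := hx
      rw [key k i]
      exact Submodule.sum_mem _ fun j _ =>
        ⟨(⟨c k j, hmem k j⟩ : D) ⊗ₜ[K] (⟨c j i, hmem j i⟩ : D), rfl⟩
    | zero => simp
    | add x y _ _ hx hy => rw [map_add]; exact Submodule.add_mem _ hx hy
    | smul a x _ hx => rw [map_smul]; exact Submodule.smul_mem _ a hx
  · exact FiniteDimensional.span_of_finite K (Set.finite_range _)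
  · intro m
    exact mem_range_lTensor_subtype b D (ρ m) (hcoeff m)
  · intro D' _ _ hρ
    rw [hD, Submodule.span_le]
    rintro _ ⟨⟨j, i⟩, rfl⟩
    exact phiAux_mem_of_mem_range b D' (ρ (b i)) (hρ (b i)) j
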